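/- Let p, λ > 0, let N be a Poisson random variable with mean λp, and let (A_u, B_u), u ≥ 1, be i.i.d. pairs independent of N distributed as (W(s) − μ_W, W(t) − μ_W), where W is a stationary {0,1}-valued process with mean μ_W, variance σ_W² = μ_W(1 − μ_W), and autocovariance r. Then E[(λ^{−1/2} Σ_{u=1}^{N} (B_u − A_u))⁴] = (2p/λ)(σ_W² − r(t−s)) + 12 p² (σ_W² − r(t−s))². -/

import Mathlib

open MeasureTheory Filter Set ProbabilityTheory

/-- `N` is a Poisson random variable with mean `m`:
`P(N = k) = e^{−m} m^k / k!` for every `k`. -/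
def IsPoissonRV {Ω : Type*} [MeasurableSpace Ω] (P : Measure Ω) (N : Ω → ℕ)
    (m : ℝ) : Prop :=
  ∀ k : ℕ, P {ω | N ω = k}
    = ENNReal.ofReal (Real.exp (-m) * m ^ k / (Nat.factorial k))

private lemma shift_summable_tsum (m : ℝ) (f g : ℕ → ℝ) (h0 : f 0 = 0)
    (hrec : ∀ k, f (k + 1) = m * g k) (hg : Summable g) :
    Summable f ∧ ∑' k, f k = m * ∑' k, g k := by
  have hs : Summable (fun k => f (k + 1)) := by
    simpa only [hrec] using hg.mul_left m
  have hf : Summable f := (summable_nat_add_iff 1).mp hs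
  refine ⟨hf, ?_⟩
  rw [hf.tsum_eq_zero_add, h0, zero_add]
  simp only [hrec]
  exact tsum_mul_left

/-- let `N` be Poisson with mean `λp` and let `(A_u, B_u)` be i.i.d.
pairs, independent of `N`, distributed as `(W(s) − μ_W, W(t) − μ_W)` for a stationary
`{0,1}`-valued process `W` with mean `μ_W`, variance `σ_W² = μ_W(1 − μ_W)` and
autocovariance `r` (here `ξ u = (W_u(s), W_u(t))` takes values in `{0,1}²`, has marginal
means `μ_W` and `E[W_u(s) W_u(t)] − μ_W² = r(t−s) =: rts`). Then
`E[(λ^{−1/2} Σ_{u=1}^{N} (B_u − A_u))⁴]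
  = (2p/λ)(σ_W² − r(t−s)) + 12 p² (σ_W² − r(t−s))²`. -/
theorem fourth_moment_poisson_random_sum_of_onoff_differences
    {Ω : Type*} [MeasurableSpace Ω] (P : Measure Ω) [IsProbabilityMeasure P]
    (p lam : ℝ) (hp : 0 < p) (hlam : 0 < lam)
    (N : Ω → ℕ) (hNmeas : Measurable N) (hN : IsPoissonRV P N (lam * p))
    (ξ : ℕ → Ω → ℝ × ℝ) (hξmeas : ∀ u, Measurable (ξ u))
    -- `{0,1}`-valued coordinates (the pair `(W_u(s), W_u(t))`)
    (h01 : ∀ u ω, ((ξ u ω).1 = 0 ∨ (ξ u ω).1 = 1) ∧ ((ξ u ω).2 = 0 ∨ (ξ u ω).2 = 1))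
    -- identically distributed pairs
    (hident : ∀ u, Measure.map (ξ u) P = Measure.map (ξ 0) P)
    -- mutually independent pairs
    (hindep : iIndepFun ξ P)
    -- the whole sequence is independent of `N`
    (hNindep : IndepFun N (fun ω (u : ℕ) => ξ u ω) P)
    (μW : ℝ) (σW2 : ℝ) (hσW2 : σW2 = μW * (1 - μW))
    -- stationarity: both marginal means equal `μ_W`
    (hmean1 : ∀ u, ∫ ω, (ξ u ω).1 ∂P = μW) (hmean2 : ∀ u, ∫ ω, (ξ u ω).2 ∂P = μW)
    -- the autocovariance value `r(t−s)`
    (rts : ℝ) (hrts : ∀ u, ∫ ω, (ξ u ω).1 * (ξ u ω).2 ∂P - μW ^ 2 = rts) :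
    ∫ ω, (lam ^ (-(1:ℝ)/2)
        * ∑ u ∈ Finset.range (N ω), (((ξ u ω).2 - μW) - ((ξ u ω).1 - μW))) ^ 4 ∂P
      = 2 * p / lam * (σW2 - rts) + 12 * p ^ 2 * (σW2 - rts) ^ 2 := by
  classical
  set m : ℝ := lam * p with hm
  have hm0 : 0 < m := mul_pos hlam hp
  set c : ℝ := lam ^ (-(1:ℝ)/2) with hc
  have hc0 : 0 < c := Real.rpow_pos_of_pos hlam _
  set v : ℝ := 2 * (σW2 - rts) with hv
  set D : ℕ → Ω → ℝ := fun u ω => (ξ u ω).2 - (ξ u ω).1 with hD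
  have measD : ∀ u, Measurable (D u) := fun u =>
    (measurable_snd.comp (hξmeas u)).sub (measurable_fst.comp (hξmeas u))
  have Dcases : ∀ u ω, D u ω = 0 ∨ D u ω = 1 ∨ D u ω = -1 := by
    intro u ω
    rcases (h01 u ω).1 with h1 | h1 <;> rcases (h01 u ω).2 with h2 | h2 <;>
      simp [hD, h1, h2]
  have bndD : ∀ u ω, |D u ω| ≤ 1 := by
    intro u ω
    rcases Dcases u ω with h | h | h <;> rw [h] <;> norm_num
  -- integrability of bounded measurable functions
  have intBdd : ∀ (g : Ω → ℝ) (C : ℝ), Measurable g → (∀ ω, |g ω| ≤ C) → Integrable g P := by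
    intro g C hg hC
    exact ⟨hg.aestronglyMeasurable,
      HasFiniteIntegral.of_bounded (C := C)
        (Eventually.of_forall (by simpa [Real.norm_eq_abs] using hC))⟩
  have bnd01 : ∀ x : ℝ, x = 0 ∨ x = 1 → |x| ≤ 1 := by
    rintro x (rfl | rfl) <;> norm_num
  have intξ1 : ∀ u, Integrable (fun ω => (ξ u ω).1) P := fun u =>
    intBdd _ 1 (measurable_fst.comp (hξmeas u)) (fun ω => bnd01 _ (h01 u ω).1)
  have intξ2 : ∀ u, Integrable (fun ω => (ξ u ω).2) P := fun u =>
    intBdd _ 1 (measurable_snd.comp (hξmeas u)) (fun ω => bnd01 _ (h01 u ω).2)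
  have intξ12 : ∀ u, Integrable (fun ω => (ξ u ω).1 * (ξ u ω).2) P := fun u =>
    intBdd _ 1 ((measurable_fst.comp (hξmeas u)).mul (measurable_snd.comp (hξmeas u)))
      (fun ω => by
        rw [abs_mul]
        calc |(ξ u ω).1| * |(ξ u ω).2| ≤ 1 * 1 :=
          mul_le_mul (bnd01 _ (h01 u ω).1) (bnd01 _ (h01 u ω).2) (abs_nonneg _) zero_le_one
        _ = 1 := one_mul 1)
  have intD : ∀ u, Integrable (D u) P := fun u => intBdd _ 1 (measD u) (bndD u)
  -- moments of D
  have hD1 : ∀ u, ∫ ω, D u ω ∂P = 0 := by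
    intro u
    have : ∫ ω, D u ω ∂P = (∫ ω, (ξ u ω).2 ∂P) - ∫ ω, (ξ u ω).1 ∂P :=
      integral_sub (intξ2 u) (intξ1 u)
    rw [this, hmean2, hmean1, sub_self]
  have hξ12 : ∀ u, ∫ ω, (ξ u ω).1 * (ξ u ω).2 ∂P = rts + μW ^ 2 := by
    intro u; have := hrts u; linarith
  have hD2 : ∀ u, ∫ ω, D u ω ^ 2 ∂P = v := by
    intro u
    have hpt : ∀ ω, D u ω ^ 2
        = (ξ u ω).1 + (ξ u ω).2 - 2 * ((ξ u ω).1 * (ξ u ω).2) := by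
      intro ω
      rcases (h01 u ω).1 with h1 | h1 <;> rcases (h01 u ω).2 with h2 | h2 <;>
        simp [hD, h1, h2] <;> ring
    calc ∫ ω, D u ω ^ 2 ∂P
        = ∫ ω, ((ξ u ω).1 + (ξ u ω).2 - 2 * ((ξ u ω).1 * (ξ u ω).2)) ∂P := by
          exact integral_congr_ae (Eventually.of_forall hpt)
      _ = (∫ ω, ((ξ u ω).1 + (ξ u ω).2) ∂P) - ∫ ω, 2 * ((ξ u ω).1 * (ξ u ω).2) ∂P :=
          integral_sub ((intξ1 u).add (intξ2 u)) ((intξ12 u).const_mul 2)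
      _ = ((∫ ω, (ξ u ω).1 ∂P) + ∫ ω, (ξ u ω).2 ∂P) - 2 * ∫ ω, (ξ u ω).1 * (ξ u ω).2 ∂P := by
          rw [integral_add (intξ1 u) (intξ2 u), integral_const_mul]
      _ = v := by rw [hmean1, hmean2, hξ12, hv, hσW2]; ring
  have hD4 : ∀ u, ∫ ω, D u ω ^ 4 ∂P = v := by
    intro u
    rw [← hD2 u]
    refine integral_congr_ae (Eventually.of_forall fun ω => ?_)
    show D u ω ^ 4 = D u ω ^ 2
    rcases Dcases u ω with h | h | h <;> rw [h] <;> norm_num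
  -- the partial sums
  set S : ℕ → Ω → ℝ := fun k ω => ∑ u ∈ Finset.range k, D u ω with hS
  have measS : ∀ k, Measurable (S k) := fun k =>
    Finset.measurable_sum _ (fun u _ => measD u)
  have bndS : ∀ k ω, |S k ω| ≤ (k : ℝ) := by
    intro k ω
    calc |∑ u ∈ Finset.range k, D u ω| ≤ ∑ u ∈ Finset.range k, |D u ω| :=
        Finset.abs_sum_le_sum_abs _ _
      _ ≤ ∑ _u ∈ Finset.range k, (1 : ℝ) := Finset.sum_le_sum (fun u _ => bndD u ω)
      _ = (k : ℝ) := by simp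
  have intSpow : ∀ k (j : ℕ), Integrable (fun ω => S k ω ^ j) P := fun k j =>
    intBdd _ ((k : ℝ) ^ j) ((measS k).pow_const j)
      (fun ω => by rw [abs_pow]; exact pow_le_pow_left₀ (abs_nonneg _) (bndS k ω) j)
  have intS : ∀ k, Integrable (S k) P := fun k => by simpa using intSpow k 1
  have intSD : ∀ k (a b : ℕ), Integrable (fun ω => S k ω ^ a * D k ω ^ b) P := by
    intro k a b
    refine intBdd _ ((k : ℝ) ^ a * 1) (((measS k).pow_const a).mul ((measD k).pow_const b)) ?_
    intro ω
    rw [abs_mul, abs_pow, abs_pow]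
    exact mul_le_mul (pow_le_pow_left₀ (abs_nonneg _) (bndS k ω) a)
      (pow_le_one₀ (abs_nonneg _) (bndD k ω)) (pow_nonneg (abs_nonneg _) b)
      (pow_nonneg (Nat.cast_nonneg k) a)
  -- independence
  have hDindep : iIndepFun D P :=
    hindep.comp (fun _ => fun x : ℝ × ℝ => x.2 - x.1)
      (fun _ => measurable_snd.sub measurable_fst)
  have hSD : ∀ k, IndepFun (S k) (D k) P := by
    intro k
    have h := hDindep.indepFun_sum_range_succ measD k
    have : (∑ j ∈ Finset.range k, D j) = S k := by
      funext ω; simp [hS, Finset.sum_apply]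
    rwa [this] at h
  have mix : ∀ k (a b : ℕ),
      ∫ ω, S k ω ^ a * D k ω ^ b ∂P = (∫ ω, S k ω ^ a ∂P) * ∫ ω, D k ω ^ b ∂P := by
    intro k a b
    have h : IndepFun (fun ω => S k ω ^ a) (fun ω => D k ω ^ b) P :=
      (hSD k).comp (measurable_id.pow_const a) (measurable_id.pow_const b)
    exact h.integral_fun_mul_eq_mul_integral ((measS k).pow_const a).aestronglyMeasurable
      ((measD k).pow_const b).aestronglyMeasurable
  -- the moments of the partial sums
  have key : ∀ k : ℕ, (∫ ω, S k ω ∂P) = 0 ∧ (∫ ω, S k ω ^ 2 ∂P) = k * v ∧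
      (∫ ω, S k ω ^ 4 ∂P) = k * v + 3 * k * ((k : ℝ) - 1) * v ^ 2 := by
    intro k
    induction k with
    | zero => simp [hS]
    | succ k ih =>
      obtain ⟨ih1, ih2, ih4⟩ := ih
      have hsplit : ∀ ω, S (k + 1) ω = S k ω + D k ω := by
        intro ω; simp only [hS, Finset.sum_range_succ]
      have m11 : ∫ ω, S k ω ^ 1 * D k ω ^ 1 ∂P = 0 := by
        rw [mix k 1 1]
        simp only [pow_one]
        rw [hD1 k, mul_zero]
      have m31 : ∫ ω, S k ω ^ 3 * D k ω ^ 1 ∂P = 0 := by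
        rw [mix k 3 1]
        simp only [pow_one]
        rw [hD1 k, mul_zero]
      have m22 : ∫ ω, S k ω ^ 2 * D k ω ^ 2 ∂P = (k * v) * v := by
        rw [mix k 2 2, ih2, hD2 k]
      have m13 : ∫ ω, S k ω ^ 1 * D k ω ^ 3 ∂P = 0 := by
        rw [mix k 1 3]
        have : ∫ ω, S k ω ^ 1 ∂P = 0 := by simpa using ih1
        rw [this, zero_mul]
      refine ⟨?_, ?_, ?_⟩
      · simp only [hsplit]
        rw [integral_add (intS k) (intD k), ih1, hD1 k, add_zero]
      · have hpt : ∀ ω, (S k ω + D k ω) ^ 2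
            = (S k ω ^ 2 + 2 * (S k ω ^ 1 * D k ω ^ 1)) + D k ω ^ 2 := fun ω => by ring
        have iD2 : Integrable (fun ω => D k ω ^ 2) P :=
          intBdd _ 1 ((measD k).pow_const 2)
            (fun ω => by rw [abs_pow]; exact pow_le_one₀ (abs_nonneg _) (bndD k ω))
        have j1 : Integrable (fun ω => S k ω ^ 2 + 2 * (S k ω ^ 1 * D k ω ^ 1)) P :=
          (intSpow k 2).add ((intSD k 1 1).const_mul 2)
        simp only [hsplit, hpt]
        rw [integral_add j1 iD2,
          integral_add (intSpow k 2) ((intSD k 1 1).const_mul 2),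
          integral_const_mul, m11, ih2, hD2 k]
        push_cast; ring
      · have hpt : ∀ ω, (S k ω + D k ω) ^ 4
            = (((S k ω ^ 4 + 4 * (S k ω ^ 3 * D k ω ^ 1)) + 6 * (S k ω ^ 2 * D k ω ^ 2))
                + 4 * (S k ω ^ 1 * D k ω ^ 3)) + D k ω ^ 4 := fun ω => by ring
        simp only [hsplit, hpt]
        have i1 : Integrable (fun ω => S k ω ^ 4 + 4 * (S k ω ^ 3 * D k ω ^ 1)) P :=
          (intSpow k 4).add ((intSD k 3 1).const_mul 4)
        have i2 : Integrable (fun ω =>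
            (S k ω ^ 4 + 4 * (S k ω ^ 3 * D k ω ^ 1)) + 6 * (S k ω ^ 2 * D k ω ^ 2)) P :=
          i1.add ((intSD k 2 2).const_mul 6)
        have i3 : Integrable (fun ω =>
            ((S k ω ^ 4 + 4 * (S k ω ^ 3 * D k ω ^ 1)) + 6 * (S k ω ^ 2 * D k ω ^ 2))
              + 4 * (S k ω ^ 1 * D k ω ^ 3)) P :=
          i2.add ((intSD k 1 3).const_mul 4)
        have iD4 : Integrable (fun ω => D k ω ^ 4) P :=
          intBdd _ 1 ((measD k).pow_const 4)
            (fun ω => by rw [abs_pow]; exact pow_le_one₀ (abs_nonneg _) (bndD k ω))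
        rw [integral_add i3 iD4, integral_add i2 ((intSD k 1 3).const_mul 4),
          integral_add i1 ((intSD k 2 2).const_mul 6),
          integral_add (intSpow k 4) ((intSD k 3 1).const_mul 4),
          integral_const_mul, integral_const_mul, integral_const_mul,
          m31, m22, m13, ih4, hD4 k]
        push_cast; ring
  -- the Poisson weights
  set q : ℕ → ℝ := fun k => Real.exp (-m) * m ^ k / (Nat.factorial k) with hq
  have hq0 : ∀ k, 0 ≤ q k := fun k => by
    apply div_nonneg (mul_nonneg (Real.exp_nonneg _) (pow_nonneg hm0.le k))
    positivity
  have hPtoReal : ∀ k, (P {ω | N ω = k}).toReal = q k := fun k => by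
    rw [hN k, ENNReal.toReal_ofReal (hq0 k)]
  -- Poisson series computations
  have g0sum : Summable (fun k => m ^ k / (Nat.factorial k) : ℕ → ℝ) :=
    Real.summable_pow_div_factorial m
  have g0tsum : ∑' k : ℕ, m ^ k / (Nat.factorial k) = Real.exp m := by
    rw [Real.exp_eq_exp_ℝ, NormedSpace.exp_eq_tsum_div]
  have fact_pos : ∀ k : ℕ, (0 : ℝ) < (Nat.factorial k : ℝ) := fun k => by
    exact_mod_cast Nat.factorial_pos k
  have hrec1 : ∀ k : ℕ, m ^ (k + 1) / (Nat.factorial (k + 1)) * ((k : ℝ) + 1)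
      = m * (m ^ k / (Nat.factorial k)) := by
    intro k
    rw [Nat.factorial_succ]
    push_cast
    field_simp
    ring
  have h1 := shift_summable_tsum m
    (fun k => m ^ k / (Nat.factorial k) * (k : ℝ))
    (fun k => m ^ k / (Nat.factorial k)) (by simp)
    (fun k => by push_cast; exact hrec1 k) g0sum
  have hrec2 : ∀ k : ℕ, m ^ (k + 1) / (Nat.factorial (k + 1)) * (((k : ℝ) + 1) * ((k : ℝ) + 1 - 1))
      = m * (m ^ k / (Nat.factorial k) * (k : ℝ)) := by
    intro k
    rw [Nat.factorial_succ]
    push_cast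
    field_simp
    ring
  have h2 := shift_summable_tsum m
    (fun k => m ^ k / (Nat.factorial k) * ((k : ℝ) * ((k : ℝ) - 1)))
    (fun k => m ^ k / (Nat.factorial k) * (k : ℝ)) (by simp)
    (fun k => by push_cast; exact hrec2 k) h1.1
  have hrec3 : ∀ k : ℕ,
      m ^ (k + 1) / (Nat.factorial (k + 1)) * (((k : ℝ) + 1) * ((k : ℝ) + 1 - 1) * ((k : ℝ) + 1 - 2))
      = m * (m ^ k / (Nat.factorial k) * ((k : ℝ) * ((k : ℝ) - 1))) := by
    intro k
    rw [Nat.factorial_succ]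
    push_cast
    field_simp
    ring
  have h3 := shift_summable_tsum m
    (fun k => m ^ k / (Nat.factorial k) * ((k : ℝ) * ((k : ℝ) - 1) * ((k : ℝ) - 2)))
    (fun k => m ^ k / (Nat.factorial k) * ((k : ℝ) * ((k : ℝ) - 1))) (by simp)
    (fun k => by push_cast; exact hrec3 k) h2.1
  have hrec4 : ∀ k : ℕ,
      m ^ (k + 1) / (Nat.factorial (k + 1))
        * (((k : ℝ) + 1) * ((k : ℝ) + 1 - 1) * ((k : ℝ) + 1 - 2) * ((k : ℝ) + 1 - 3))
      = m * (m ^ k / (Nat.factorial k) * ((k : ℝ) * ((k : ℝ) - 1) * ((k : ℝ) - 2))) := by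
    intro k
    rw [Nat.factorial_succ]
    push_cast
    field_simp
    ring
  have h4 := shift_summable_tsum m
    (fun k => m ^ k / (Nat.factorial k)
      * ((k : ℝ) * ((k : ℝ) - 1) * ((k : ℝ) - 2) * ((k : ℝ) - 3)))
    (fun k => m ^ k / (Nat.factorial k) * ((k : ℝ) * ((k : ℝ) - 1) * ((k : ℝ) - 2))) (by simp)
    (fun k => by push_cast; exact hrec4 k) h3.1
  have hk4sum : Summable (fun k : ℕ => m ^ k / (Nat.factorial k) * (k : ℝ) ^ 4) := by
    have heq : (fun k : ℕ => m ^ k / (Nat.factorial k) * (k : ℝ) ^ 4)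
        = fun k : ℕ => (m ^ k / (Nat.factorial k)
            * ((k : ℝ) * ((k : ℝ) - 1) * ((k : ℝ) - 2) * ((k : ℝ) - 3)))
          + (6 * (m ^ k / (Nat.factorial k) * ((k : ℝ) * ((k : ℝ) - 1) * ((k : ℝ) - 2)))
          + (7 * (m ^ k / (Nat.factorial k) * ((k : ℝ) * ((k : ℝ) - 1)))
          + m ^ k / (Nat.factorial k) * (k : ℝ))) := by
      funext k; ring
    rw [heq]
    exact h4.1.add ((h3.1.mul_left 6).add ((h2.1.mul_left 7).add h1.1))
  -- the partition by values of N
  set s : ℕ → Set Ω := fun k => {ω | N ω = k} with hsdef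
  have hsm : ∀ k, MeasurableSet (s k) := fun k => hNmeas (measurableSet_singleton k)
  have hsd : Pairwise (Function.onFun Disjoint s) := by
    intro i j hij
    rw [Function.onFun, Set.disjoint_left]
    rintro ω (hi : N ω = i) (hj : N ω = j)
    exact hij (hi ▸ hj ▸ rfl)
  have hsU : (⋃ k, s k) = univ := by
    ext ω; simp [hsdef]
  -- the integrand
  set f : Ω → ℝ := fun ω => (c * S (N ω) ω) ^ 4 with hf
  have measNS : Measurable (fun ω => S (N ω) ω) := by
    have h : Measurable (fun z : Ω × ℕ => S z.2 z.1) :=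
      measurable_from_prod_countable_left (fun k => measS k)
    exact h.comp (measurable_id.prodMk hNmeas)
  have measf : Measurable f := (measurable_const.mul measNS).pow_const 4
  have hf0 : ∀ ω, 0 ≤ f ω := fun ω => by positivity
  have hfbnd : ∀ k, ∀ ω ∈ s k, f ω ≤ c ^ 4 * (k : ℝ) ^ 4 := by
    intro k ω hω
    have hNω : N ω = k := hω
    have : |c * S (N ω) ω| ≤ c * (k : ℝ) := by
      rw [abs_mul, abs_of_pos hc0, hNω]
      exact mul_le_mul_of_nonneg_left (bndS k ω) hc0.le
    have e1 : f ω = |c * S (N ω) ω| ^ 4 := by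
      rw [hf, ← abs_pow, abs_of_nonneg (by positivity : (0:ℝ) ≤ (c * S (N ω) ω) ^ 4)]
    have e2 : |c * S (N ω) ω| ^ 4 ≤ (c * (k : ℝ)) ^ 4 :=
      pow_le_pow_left₀ (abs_nonneg _) this 4
    rw [e1]
    refine le_trans e2 (le_of_eq ?_)
    ring
  -- integrability of f
  have sumq4 : Summable (fun k : ℕ => c ^ 4 * (k : ℝ) ^ 4 * q k) := by
    refine Summable.congr ((hk4sum.mul_left (c ^ 4 * Real.exp (-m)))) fun k => ?_
    rw [hq]; ring
  have intf : Integrable f P := by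
    refine ⟨measf.aestronglyMeasurable, ?_⟩
    rw [hasFiniteIntegral_iff_ofReal (Eventually.of_forall hf0)]
    have hle : ∫⁻ ω, ENNReal.ofReal (f ω) ∂P
        ≤ ∑' k : ℕ, ENNReal.ofReal (c ^ 4 * (k : ℝ) ^ 4) * P (s k) := by
      rw [← setLIntegral_univ, ← hsU, lintegral_iUnion hsm hsd]
      refine ENNReal.tsum_le_tsum fun k => ?_
      calc ∫⁻ ω in s k, ENNReal.ofReal (f ω) ∂P
          ≤ ∫⁻ _ω in s k, ENNReal.ofReal (c ^ 4 * (k : ℝ) ^ 4) ∂P :=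
            setLIntegral_mono measurable_const
              (fun ω hω => ENNReal.ofReal_le_ofReal (hfbnd k ω hω))
        _ = ENNReal.ofReal (c ^ 4 * (k : ℝ) ^ 4) * P (s k) := setLIntegral_const _ _
    have hsum : ∑' k : ℕ, ENNReal.ofReal (c ^ 4 * (k : ℝ) ^ 4) * P (s k)
        = ENNReal.ofReal (∑' k : ℕ, c ^ 4 * (k : ℝ) ^ 4 * q k) := by
      have hterm : ∀ k : ℕ, ENNReal.ofReal (c ^ 4 * (k : ℝ) ^ 4) * P (s k)
          = ENNReal.ofReal (c ^ 4 * (k : ℝ) ^ 4 * q k) := by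
        intro k
        rw [show P (s k) = ENNReal.ofReal (q k) from hN k,
          ← ENNReal.ofReal_mul (by positivity)]
      simp only [hterm]
      rw [ENNReal.ofReal_tsum_of_nonneg (fun k => by
        have := hq0 k; positivity) sumq4]
    exact lt_of_le_of_lt (le_trans hle (le_of_eq hsum)) ENNReal.ofReal_lt_top
  -- reduce the goal to `∫ f`
  have hgoal : ∫ ω, (lam ^ (-(1:ℝ)/2)
      * ∑ u ∈ Finset.range (N ω), (((ξ u ω).2 - μW) - ((ξ u ω).1 - μW))) ^ 4 ∂P
      = ∫ ω, f ω ∂P := by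
    refine integral_congr_ae (Eventually.of_forall fun ω => ?_)
    have hDe : ∀ u, ((ξ u ω).2 - μW) - ((ξ u ω).1 - μW) = D u ω := fun u => by
      rw [hD]; ring
    simp only [hDe, hf, hS, hc]
  rw [hgoal]
  -- decompose over the partition
  have hdecomp : ∫ ω, f ω ∂P = ∑' k, ∫ ω in s k, f ω ∂P := by
    rw [← setIntegral_univ (μ := P) (f := f), ← hsU]
    exact integral_iUnion hsm hsd (by rw [hsU]; exact intf.integrableOn)
  rw [hdecomp]
  -- compute each piece
  have Mk : ∀ k : ℕ, ∫ ω, (c * S k ω) ^ 4 ∂P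
      = c ^ 4 * ((k : ℝ) * v + 3 * k * ((k : ℝ) - 1) * v ^ 2) := by
    intro k
    have hpow : ∀ ω, (c * S k ω) ^ 4 = c ^ 4 * S k ω ^ 4 := fun ω => by ring
    simp only [hpow]
    rw [integral_const_mul, (key k).2.2]
  have hpiece : ∀ k : ℕ, ∫ ω in s k, f ω ∂P
      = q k * (c ^ 4 * ((k : ℝ) * v + 3 * k * ((k : ℝ) - 1) * v ^ 2)) := by
    intro k
    have hcongr : EqOn f (fun ω => (c * S k ω) ^ 4) (s k) := by
      intro ω hω
      have hNω : N ω = k := hω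
      show (c * S (N ω) ω) ^ 4 = (c * S k ω) ^ 4
      rw [hNω]
    rw [setIntegral_congr_fun (hsm k) hcongr, ← integral_indicator (hsm k)]
    set φ : ℕ → ℝ := fun n => if n = k then (1:ℝ) else 0 with hφ
    set ψ : (ℕ → ℝ × ℝ) → ℝ :=
      fun g => (c * ∑ u ∈ Finset.range k, ((g u).2 - (g u).1)) ^ 4 with hψ
    have hψmeas : Measurable ψ := by
      apply Measurable.pow_const
      exact measurable_const.mul (Finset.measurable_sum _ (fun u _ =>
        (measurable_snd.comp (measurable_pi_apply u)).sub
          (measurable_fst.comp (measurable_pi_apply u))))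
    have hXY : IndepFun (φ ∘ N) (ψ ∘ fun ω (u : ℕ) => ξ u ω) P :=
      hNindep.comp measurable_from_nat hψmeas
    have hind_eq : (fun ω => Set.indicator (s k) (fun ω => (c * S k ω) ^ 4) ω)
        = fun ω => (φ ∘ N) ω * (ψ ∘ fun ω (u : ℕ) => ξ u ω) ω := by
      funext ω
      by_cases hω : N ω = k
      · have hmem : ω ∈ s k := hω
        rw [Set.indicator_of_mem hmem, Function.comp_apply, Function.comp_apply, hφ]
        simp only [if_pos hω, one_mul]
        rfl
      · have hmem : ω ∉ s k := hω
        rw [Set.indicator_of_notMem hmem, Function.comp_apply, Function.comp_apply, hφ]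
        simp only [if_neg hω, zero_mul]
    rw [hind_eq, IndepFun.integral_fun_mul_eq_mul_integral hXY
      (measurable_from_nat.comp hNmeas).aestronglyMeasurable
      ((hψmeas.comp (measurable_pi_lambda _ (fun u => hξmeas u)))).aestronglyMeasurable]
    have hφN : ∫ ω, (φ ∘ N) ω ∂P = q k := by
      have hie : (fun ω => (φ ∘ N) ω) = Set.indicator (s k) (fun _ => (1:ℝ)) := by
        funext ω
        by_cases hω : N ω = k
        · rw [Set.indicator_of_mem (show ω ∈ s k from hω)]
          simp [hφ, hω]
        · rw [Set.indicator_of_notMem (show ω ∉ s k from hω)]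
          simp [hφ, hω]
      rw [show (φ ∘ N) = Set.indicator (s k) (fun _ => (1:ℝ)) from hie,
        integral_indicator_const (1:ℝ) (hsm k), smul_eq_mul, mul_one]
      exact hPtoReal k
    have hψseq : ∫ ω, (ψ ∘ fun ω (u : ℕ) => ξ u ω) ω ∂P
        = c ^ 4 * ((k : ℝ) * v + 3 * k * ((k : ℝ) - 1) * v ^ 2) := by
      rw [← Mk k]
      refine integral_congr_ae (Eventually.of_forall fun ω => ?_)
      simp [hψ, hS, hD]
    rw [hφN, hψseq]
  simp only [hpiece]
  -- sum the Poisson series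
  have hterm : ∀ k : ℕ, q k * (c ^ 4 * ((k : ℝ) * v + 3 * k * ((k : ℝ) - 1) * v ^ 2))
      = (Real.exp (-m) * c ^ 4 * v) * (m ^ k / (Nat.factorial k) * (k : ℝ))
        + (Real.exp (-m) * c ^ 4 * 3 * v ^ 2)
            * (m ^ k / (Nat.factorial k) * ((k : ℝ) * ((k : ℝ) - 1))) := by
    intro k; rw [hq]; ring
  simp only [hterm]
  rw [Summable.tsum_add (h1.1.mul_left _) (h2.1.mul_left _), tsum_mul_left, tsum_mul_left,
    h2.2, h1.2, g0tsum]
  have hc4 : c ^ 4 = (lam ^ 2)⁻¹ := by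
    rw [hc, ← Real.rpow_natCast (lam ^ (-(1:ℝ)/2)) 4, ← Real.rpow_mul hlam.le]
    norm_num
  rw [Real.exp_neg, hc4, hv, hm]
  have hE : Real.exp (lam * p) ≠ 0 := (Real.exp_pos _).ne'
  field_simp
  ring
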